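/- Let W ⊆ ℝ be a nonempty compact interval of length at most D. Suppose a, b : [0, ∞) → W are measurable functions such that b(σ + c) ≥ a(σ) for all σ ≥ 0, where c > 0 is a fixed constant. If X ~ Exp(η) with η > 0, then E[b(X)] ≥ E[a(X)] − D(1 − exp(−ηc)), and in particular E[b(X)] ≥ E[a(X)] − ηcD. -/

import Mathlib

open MeasureTheory ProbabilityTheory Real

section Aux
open Set Filter
open scoped ENNReal NNReal Topology

private lemma my_integral_expMeasure (η : ℝ) (hη : 0 < η) (g : ℝ → ℝ) :
    ∫ x, g x ∂(expMeasure η) = ∫ x in Ioi (0:ℝ), g x * (η * exp (-(η * x))) := by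
  have hmeas : Measurable (fun x => Real.toNNReal (exponentialPDFReal η x)) :=
    (measurable_exponentialPDFReal η).real_toNNReal
  rw [show expMeasure η
      = volume.withDensity (fun x => ((Real.toNNReal (exponentialPDFReal η x) : ℝ≥0) : ℝ≥0∞)) from rfl,
    integral_withDensity_eq_integral_smul hmeas]
  rw [← setIntegral_eq_integral_of_forall_compl_eq_zero (s := Ici (0:ℝ)) ?_]
  · rw [integral_Ici_eq_integral_Ioi]
    refine setIntegral_congr_fun measurableSet_Ioi (fun x hx => ?_)
    have hx0 : (0:ℝ) < x := hx
    have hpdf : exponentialPDFReal η x = η * exp (-(η * x)) := by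
      simp only [exponentialPDFReal, gammaPDFReal, if_pos hx0.le, Real.Gamma_one, rpow_one,
        sub_self, rpow_zero, div_one, mul_one]
    simp [hpdf, NNReal.smul_def, Real.coe_toNNReal _ (by positivity : (0:ℝ) ≤ η * exp (-(η * x)))]
    ring
  · intro x hx
    have hx0 : x < 0 := by simpa using hx
    simp [exponentialPDFReal, gammaPDFReal, if_neg (not_le.mpr hx0)]

end Aux

theorem stmt_8 (lo hi D : ℝ) (hle : lo ≤ hi) (hD : hi - lo ≤ D)
    (a b : ℝ → ℝ) (ha : Measurable a) (hb : Measurable b)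
    (haW : ∀ σ ≥ (0:ℝ), a σ ∈ Set.Icc lo hi) (hbW : ∀ σ ≥ (0:ℝ), b σ ∈ Set.Icc lo hi)
    (c : ℝ) (hc : 0 < c) (hmono : ∀ σ ≥ (0:ℝ), b (σ + c) ≥ a σ)
    (η : ℝ) (hη : 0 < η) :
    (∫ x, b x ∂(expMeasure η)) ≥ (∫ x, a x ∂(expMeasure η)) - D * (1 - exp (-η * c)) ∧
    (∫ x, b x ∂(expMeasure η)) ≥ (∫ x, a x ∂(expMeasure η)) - η * c * D := by
  classical
  set f : ℝ → ℝ := fun x => η * exp (-(η * x)) with hf_def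
  have hfcont : Continuous f := by
    rw [hf_def]; continuity
  have hfmeas : Measurable f := hfcont.measurable
  have hfpos : ∀ x : ℝ, 0 < f x := fun x => by positivity
  have hf_int : IntegrableOn f (Set.Ioi (0:ℝ)) := by
    have := (exp_neg_integrableOn_Ioi (0:ℝ) hη).const_mul η
    simpa [hf_def, neg_mul, IntegrableOn] using this
  have hF_deriv : ∀ x : ℝ, HasDerivAt (fun y => -exp (-(η * y))) (f x) x := fun x =>
    hasDerivAt_neg_exp_mul_exp
  have htend : Filter.Tendsto (fun y : ℝ => -exp (-(η * y))) Filter.atTop (nhds 0) := by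
    have h1 : Filter.Tendsto (fun y : ℝ => -(η * y)) Filter.atTop Filter.atBot :=
      Filter.tendsto_neg_atTop_atBot.comp (Filter.Tendsto.const_mul_atTop hη Filter.tendsto_id)
    have h2 := Real.tendsto_exp_atBot.comp h1
    simpa using h2.neg
  have hfull : ∫ x in Set.Ioi (0:ℝ), f x = 1 := by
    have h := integral_Ioi_of_hasDerivAt_of_tendsto (f := fun y => -exp (-(η * y))) (f' := f)
      (a := (0:ℝ)) (m := 0)
      ((continuous_exp.comp ((continuous_const.mul continuous_id).neg)).neg.continuousWithinAt)
      (fun x _ => hF_deriv x) hf_int htend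
    simp at h; linarith
  set E : ℝ := exp (-(η * c)) with hE_def
  have hE0 : 0 < E := exp_pos _
  have hE1 : E < 1 := by rw [hE_def, exp_lt_one_iff]; nlinarith
  have hpart : ∫ x in Set.Ioc (0:ℝ) c, f x = 1 - E := by
    have h := intervalIntegral.integral_eq_sub_of_hasDerivAt
      (f := fun y => -exp (-(η * y))) (f' := f) (a := (0:ℝ)) (b := c)
      (fun x _ => hF_deriv x) (hfcont.intervalIntegrable 0 c)
    rw [intervalIntegral.integral_of_le hc.le] at h
    simp at h; rw [hE_def]; linarith
  set M : ℝ := max |lo| |hi| with hM_def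
  have habs : ∀ y, y ∈ Set.Icc lo hi → |y| ≤ M := fun y hy =>
    abs_le_max_abs_abs hy.1 hy.2
  have hInt : ∀ g : ℝ → ℝ, Measurable g → (∀ x ∈ Set.Ioi (0:ℝ), |g x| ≤ M) →
      IntegrableOn (fun x => g x * f x) (Set.Ioi (0:ℝ)) := by
    intro g hg hgB
    refine Integrable.mono' (hf_int.const_mul M) ((hg.mul hfmeas).aestronglyMeasurable) ?_
    filter_upwards [ae_restrict_mem measurableSet_Ioi] with x hx
    rw [Real.norm_eq_abs, abs_mul, abs_of_pos (hfpos x)]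
    exact mul_le_mul_of_nonneg_right (hgB x hx) (hfpos x).le
  have hbB : ∀ x ∈ Set.Ioi (0:ℝ), |b x| ≤ M := fun x hx => habs _ (hbW x (le_of_lt hx))
  have haB : ∀ x ∈ Set.Ioi (0:ℝ), |a x| ≤ M := fun x hx => habs _ (haW x (le_of_lt hx))
  have hbcB : ∀ x ∈ Set.Ioi (0:ℝ), |b (x + c)| ≤ M := fun x hx =>
    habs _ (hbW (x + c) (by have : (0:ℝ) < x := hx; linarith))
  have hInt_b := hInt b hb hbB
  have hInt_a := hInt a ha haB
  have hInt_bc := hInt (fun x => b (x + c)) (hb.comp (measurable_id.add_const c)) hbcB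
  set Ia : ℝ := ∫ x in Set.Ioi (0:ℝ), a x * f x with hIa_def
  set Ib : ℝ := ∫ x in Set.Ioi (0:ℝ), b x * f x with hIb_def
  set Ibc : ℝ := ∫ x in Set.Ioi (0:ℝ), b (x + c) * f x with hIbc_def
  -- change of variables
  have h1 : ∫ x in Set.Ioi (0:ℝ), b (x + c) * f (x + c) = ∫ x in Set.Ioi c, b x * f x := by
    rw [← integral_indicator measurableSet_Ioi, ← integral_indicator measurableSet_Ioi]
    calc ∫ x, (Set.Ioi (0:ℝ)).indicator (fun y => b (y + c) * f (y + c)) x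
        = ∫ x, (Set.Ioi c).indicator (fun y => b y * f y) (x + c) := by
          congr 1; ext x
          by_cases hx : 0 < x
          · simp [Set.indicator_apply, Set.mem_Ioi, hx, show c < x + c by linarith]
          · simp [Set.indicator_apply, Set.mem_Ioi, hx,
              show ¬ c < x + c by intro h; exact hx (by linarith)]
      _ = ∫ x, (Set.Ioi c).indicator (fun y => b y * f y) x :=
          integral_add_right_eq_self _ c
  have hshift : ∫ x in Set.Ioi c, b x * f x = E * Ibc := by
    rw [← h1, hIbc_def, ← integral_const_mul]
    refine setIntegral_congr_fun measurableSet_Ioi (fun x _ => ?_)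
    have hfc : f (x + c) = E * f x := by
      simp only [hf_def, hE_def]
      rw [show -(η * (x + c)) = -(η * c) + -(η * x) by ring, Real.exp_add]; ring
    rw [hfc]; ring
  have hsplit : Ib = (∫ x in Set.Ioc (0:ℝ) c, b x * f x) + E * Ibc := by
    have hu := setIntegral_union (μ := volume) (f := fun x => b x * f x)
      (Set.Ioc_disjoint_Ioi (le_refl c)) measurableSet_Ioi
      (hInt_b.mono_set Set.Ioc_subset_Ioi_self)
      (hInt_b.mono_set (Set.Ioi_subset_Ioi hc.le))
    rw [Set.Ioc_union_Ioi_eq_Ioi hc.le] at hu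
    rw [hIb_def, hu, hshift]
  have hJ : lo * (1 - E) ≤ ∫ x in Set.Ioc (0:ℝ) c, b x * f x := by
    have hm := setIntegral_mono_on (μ := volume) (s := Set.Ioc (0:ℝ) c)
      (f := fun x => lo * f x) (g := fun x => b x * f x)
      ((hf_int.mono_set Set.Ioc_subset_Ioi_self).const_mul lo)
      (hInt_b.mono_set Set.Ioc_subset_Ioi_self)
      measurableSet_Ioc
      (fun x hx => mul_le_mul_of_nonneg_right ((hbW x hx.1.le).1) (hfpos x).le)
    calc lo * (1 - E) = ∫ x in Set.Ioc (0:ℝ) c, lo * f x := by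
          rw [integral_const_mul, hpart]
      _ ≤ _ := hm
  have hIbc_hi : Ibc ≤ hi := by
    have hm := setIntegral_mono_on (μ := volume) (s := Set.Ioi (0:ℝ))
      (f := fun x => b (x + c) * f x) (g := fun x => hi * f x)
      hInt_bc (hf_int.const_mul hi) measurableSet_Ioi
      (fun x hx => mul_le_mul_of_nonneg_right
        ((hbW (x + c) (by have : (0:ℝ) < x := hx; linarith)).2) (hfpos x).le)
    calc Ibc ≤ ∫ x in Set.Ioi (0:ℝ), hi * f x := hm
      _ = hi := by rw [integral_const_mul, hfull, mul_one]
  have hIaIbc : Ia ≤ Ibc := by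
    refine setIntegral_mono_on hInt_a hInt_bc measurableSet_Ioi (fun x hx => ?_)
    exact mul_le_mul_of_nonneg_right (hmono x (le_of_lt hx)) (hfpos x).le
  have hDnn : 0 ≤ D := le_trans (by linarith) hD
  have hgoal1 : Ib ≥ Ia - D * (1 - E) := by
    nlinarith [mul_le_mul_of_nonneg_right hD (by linarith : (0:ℝ) ≤ 1 - E),
      mul_le_mul_of_nonneg_left hIbc_hi (by linarith : (0:ℝ) ≤ 1 - E)]
  have hEηc : 1 - E ≤ η * c := by
    have h := add_one_le_exp (-(η * c)); rw [← hE_def] at h; linarith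
  have ha_eq : ∫ x, a x ∂(expMeasure η) = Ia := my_integral_expMeasure η hη a
  have hb_eq : ∫ x, b x ∂(expMeasure η) = Ib := my_integral_expMeasure η hη b
  have hEc : exp (-η * c) = E := by rw [hE_def, neg_mul]
  constructor
  · rw [ha_eq, hb_eq, hEc]; exact hgoal1
  · rw [ha_eq, hb_eq]
    have hDE : D * (1 - E) ≤ η * c * D := by
      calc D * (1 - E) ≤ D * (η * c) := mul_le_mul_of_nonneg_left hEηc hDnn
        _ = η * c * D := by ring
    linarith
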